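/- For the median m(D) of an admissible distribution D (density at least L on [m(D)-r, m(D)+r]), the empirical left median m(X) of n i.i.d. samples satisfies P(|m(X) - m(D)| ≥ t) ≤ 2·exp(-n·L²·t²/2) for all t ∈ [0, r]. -/

import Mathlib

open MeasureTheory ProbabilityTheory

/-- The left empirical median: the `⌊n/2⌋`-th smallest coordinate (1-indexed). -/
noncomputable def leftMedian {n : ℕ} (X : Fin n → ℝ) : ℝ :=
  (List.insertionSort (· ≤ ·) (List.ofFn X)).getD (n / 2 - 1) 0

/-! ### Auxiliary lemmas -/

lemma bern_den_pos {p : ℝ} (hp0 : 0 ≤ p) (hp1 : p ≤ 1) (s : ℝ) :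
    0 < 1 - p + p * Real.exp s := by
  rcases le_total (Real.exp s) 1 with h | h
  · nlinarith [Real.exp_pos s, mul_nonneg hp0 (Real.exp_pos s).le]
  · nlinarith [mul_nonneg hp0 (sub_nonneg.2 h)]

lemma hoeffding_bernoulli {p : ℝ} (hp0 : 0 ≤ p) (hp1 : p ≤ 1) {s : ℝ} (hs : 0 ≤ s) :
    1 - p + p * Real.exp s ≤ Real.exp (p * s + s ^ 2 / 8) := by
  set den : ℝ → ℝ := fun s => 1 - p + p * Real.exp s with hden
  have hdpos : ∀ u : ℝ, 0 < den u := fun u => bern_den_pos hp0 hp1 u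
  set g : ℝ → ℝ := fun u => p + u / 4 - p * Real.exp u / den u with hg
  set F : ℝ → ℝ := fun u => p * u + u ^ 2 / 8 - Real.log (den u) with hF
  have hdenD : ∀ u : ℝ, HasDerivAt den (p * Real.exp u) u := by
    intro u
    exact ((Real.hasDerivAt_exp u).const_mul p).const_add (1 - p)
  have hgD : ∀ u : ℝ, HasDerivAt g (1 / 4 - p * Real.exp u * (1 - p) / (den u) ^ 2) u := by
    intro u
    have h1 : HasDerivAt (fun u => p * Real.exp u) (p * Real.exp u) u :=
      (Real.hasDerivAt_exp u).const_mul p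
    have h2 : HasDerivAt (fun u => p * Real.exp u / den u)
        ((p * Real.exp u * den u - p * Real.exp u * (p * Real.exp u)) / (den u) ^ 2) u :=
      h1.div (hdenD u) (hdpos u).ne'
    have h3 : HasDerivAt (fun u => p + u / 4) (1 / 4) u := by
      simpa using ((hasDerivAt_id u).div_const 4).const_add p
    have h5 := h3.sub h2
    refine h5.congr_deriv ?_
    have h6 : p * Real.exp u * den u - p * Real.exp u * (p * Real.exp u)
        = p * Real.exp u * (1 - p) := by
      simp only [hden]; ring
    rw [h6]
  have hg'nonneg : ∀ u : ℝ, 0 ≤ 1 / 4 - p * Real.exp u * (1 - p) / (den u) ^ 2 := by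
    intro u
    have h4 : 4 * (p * Real.exp u * (1 - p)) ≤ (den u) ^ 2 := by
      have : den u = 1 - p + p * Real.exp u := rfl
      rw [this]
      nlinarith [sq_nonneg (1 - p - p * Real.exp u)]
    have hd := hdpos u
    rw [sub_nonneg, div_le_iff₀ (by positivity)]
    generalize hDu : den u = Du at h4 hd ⊢
    linarith
  have hgmono : Monotone g := by
    refine monotone_of_deriv_nonneg (fun u => (hgD u).differentiableAt) ?_
    intro u
    rw [(hgD u).deriv]
    exact hg'nonneg u
  have hg0 : g 0 = 0 := by
    simp only [hg, hden]
    rw [Real.exp_zero]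
    field_simp
    ring
  have hFD : ∀ u : ℝ, HasDerivAt F (g u) u := by
    intro u
    have h2 : HasDerivAt (fun v => Real.log (den v)) (p * Real.exp u / den u) u :=
      (hdenD u).log (hdpos u).ne'
    have h1 : HasDerivAt (fun v : ℝ => p * v + v ^ 2 / 8) (p + u / 4) u := by
      have h2' : HasDerivAt (fun v : ℝ => p * v) p u := by
        simpa using (hasDerivAt_id u).const_mul p
      have h3' := h2'.add ((hasDerivAt_pow 2 u).div_const 8)
      refine h3'.congr_deriv ?_
      ring
    exact h1.sub h2
  have hFmono : MonotoneOn F (Set.Ici 0) := by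
    have hFdiff : Differentiable ℝ F := fun u => (hFD u).differentiableAt
    refine monotoneOn_of_deriv_nonneg (convex_Ici 0) hFdiff.continuous.continuousOn
      (fun u _ => (hFdiff u).differentiableWithinAt) ?_
    intro u hu
    rw [(hFD u).deriv]
    have hu0 : (0:ℝ) ≤ u := by
      have : u ∈ Set.Ioi (0:ℝ) := by simpa [interior_Ici] using hu
      exact le_of_lt this
    calc (0:ℝ) = g 0 := hg0.symm
    _ ≤ g u := hgmono hu0
  have hF0 : F 0 = 0 := by simp [hF, hden]
  have hFs : (0:ℝ) ≤ F s := by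
    calc (0:ℝ) = F 0 := hF0.symm
    _ ≤ F s := hFmono Set.self_mem_Ici hs hs
  have hlog : Real.log (den s) ≤ p * s + s ^ 2 / 8 := by
    simp only [hF] at hFs; linarith
  calc den s = Real.exp (Real.log (den s)) := (Real.exp_log (hdpos s)).symm
  _ ≤ Real.exp (p * s + s ^ 2 / 8) := Real.exp_le_exp.2 hlog

lemma countP_sorted_get {l : List ℝ} (hs : l.Pairwise (· ≤ ·)) (q : ℝ → Bool)
    (hq : ∀ x y : ℝ, x ≤ y → q y = true → q x = true) {j : ℕ} (hj : j < l.length) :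
    q (l.get ⟨j, hj⟩) = true ↔ j + 1 ≤ l.countP q := by
  constructor
  · intro hqj
    have hsplit := List.take_append_drop (j + 1) l
    have h1 : (l.take (j + 1)).countP q = j + 1 := by
      rw [List.countP_eq_length.2, List.length_take]
      · omega
      · intro a ha
        obtain ⟨i, hi, rfl⟩ := List.mem_iff_getElem.1 ha
        have hil : i < l.length := by
          have := List.length_take (i := j+1) (l := l); omega
        have h2 : (l.take (j+1))[i] = l[i] := List.getElem_take
        rw [h2]
        have hij : i ≤ j := by
          have := List.length_take (i := j+1) (l := l); omega
        exact hq _ _ (hs.rel_get_of_le (a := ⟨i, hil⟩) (b := ⟨j, hj⟩) hij) hqj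
    calc j + 1 = (l.take (j+1)).countP q := h1.symm
    _ ≤ (l.take (j+1)).countP q + (l.drop (j+1)).countP q := Nat.le_add_right _ _
    _ = l.countP q := by rw [← List.countP_append, hsplit]
  · intro hcount
    by_contra hqj
    have h0 : (l.drop j).countP q = 0 := by
      rw [List.countP_eq_zero]
      intro a ha
      obtain ⟨i, hi, rfl⟩ := List.mem_iff_getElem.1 ha
      have hlen := List.length_drop (i := j) (l := l)
      have hjil : j + i < l.length := by omega
      have h2 : (l.drop j)[i] = l[j + i] := List.getElem_drop
      rw [h2]
      intro hqa
      exact hqj (hq _ _ (hs.rel_get_of_le (a := ⟨j, hj⟩) (b := ⟨j + i, hjil⟩)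
        (Fin.mk_le_mk.2 (by omega))) hqa)
    have : l.countP q ≤ j := by
      calc l.countP q = (l.take j).countP q + (l.drop j).countP q := by
            rw [← List.countP_append, List.take_append_drop]
      _ = (l.take j).countP q := by omega
      _ ≤ (l.take j).length := List.countP_le_length
      _ ≤ j := by rw [List.length_take]; omega
    omega

lemma countP_ofFn_eq_sum {n : ℕ} (f : Fin n → ℝ) (q : ℝ → Bool) :
    (List.ofFn f).countP q = ∑ i, if q (f i) then 1 else 0 := by
  induction n with
  | zero => simp
  | succ m ih =>
    rw [List.ofFn_succ, List.countP_cons, Fin.sum_univ_succ, ih]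
    omega

lemma leftMedian_pred {n : ℕ} (hn : 0 < n) (X : Fin n → ℝ) (q : ℝ → Bool)
    (hq : ∀ x y : ℝ, x ≤ y → q y = true → q x = true) :
    q (leftMedian X) = true ↔ n / 2 - 1 + 1 ≤ (List.ofFn X).countP q := by
  set l := List.insertionSort (· ≤ ·) (List.ofFn X) with hl
  have hlen : l.length = n := by rw [hl, List.length_insertionSort, List.length_ofFn]
  have hj : n / 2 - 1 < l.length := by omega
  have hmed : leftMedian X = l.get ⟨n / 2 - 1, hj⟩ := by
    rw [leftMedian, ← hl, List.getD_eq_getElem l 0 hj]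
    rfl
  rw [hmed, countP_sorted_get (List.pairwise_insertionSort _ _) q hq hj,
    (List.perm_insertionSort _ _).countP_eq]

lemma indicator_chernoff {Ω : Type*} [MeasurableSpace Ω] (μ : Measure Ω) [IsProbabilityMeasure μ]
    {n : ℕ} (hn : 0 < n) (X : Fin n → Ω → ℝ) (hmeas : ∀ i, Measurable (X i))
    (hindep : iIndepFun X μ)
    (A : Set ℝ) (hA : MeasurableSet A) (pm c : ℝ) (hpm0 : 0 ≤ pm) (hpm1 : pm ≤ 1)
    (hple : ∀ i, (μ (X i ⁻¹' A)).toReal ≤ pm) (hc : n * pm ≤ c) :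
    μ {ω | c ≤ ∑ i, A.indicator (fun _ => (1:ℝ)) (X i ω)}
      ≤ ENNReal.ofReal (Real.exp (-2 * (c - n * pm) ^ 2 / n)) := by
  have hnR : (0:ℝ) < n := Nat.cast_pos.2 hn
  set Y : Fin n → Ω → ℝ := fun i ω => A.indicator (fun _ => (1:ℝ)) (X i ω) with hY
  have hY01 : ∀ i ω, Y i ω = 0 ∨ Y i ω = 1 := by
    intro i ω
    by_cases h : X i ω ∈ A
    · right; simp [hY, Set.indicator_of_mem h]
    · left; simp [hY, Set.indicator_of_notMem h]
  have hYmeas : ∀ i, Measurable (Y i) :=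
    fun i => (measurable_const.indicator hA).comp (hmeas i)
  have hYindep : iIndepFun Y μ :=
    hindep.comp _ (fun i => measurable_const.indicator hA)
  set S : Ω → ℝ := ∑ i, Y i with hS
  have hSapp : ∀ ω, S ω = ∑ i, Y i ω := fun ω => by simp [hS]
  have hSfun : S = fun ω => ∑ i, Y i ω := funext hSapp
  have hSmeas : Measurable S := by
    rw [hSfun]
    exact Finset.measurable_sum _ fun i _ => (hYmeas i)
  have hSle : ∀ ω, S ω ≤ n := by
    intro ω
    rw [hSapp]
    calc ∑ i : Fin n, Y i ω ≤ ∑ i : Fin n, 1 := by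
          refine Finset.sum_le_sum fun i _ => ?_
          rcases hY01 i ω with h | h <;> rw [h] <;> norm_num
    _ = n := by simp
  set d := c - n * pm with hd
  have hd0 : 0 ≤ d := by rw [hd]; linarith
  set s := 4 * d / n with hsdef
  have hs0 : 0 ≤ s := by positivity
  have hintS : Integrable (fun ω => Real.exp (s * S ω)) μ := by
    refine (integrable_const (Real.exp (s * n))).mono'
      ((hSmeas.const_mul s).exp.aestronglyMeasurable) (ae_of_all _ fun ω => ?_)
    rw [Real.norm_eq_abs, abs_of_pos (Real.exp_pos _), Real.exp_le_exp]
    exact mul_le_mul_of_nonneg_left (hSle ω) hs0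
  have key := measure_ge_le_exp_mul_mgf (μ := μ) (X := S) (t := s) c hs0 hintS
  have hmgf : ∀ i, mgf (Y i) μ s ≤ Real.exp (pm * s + s ^ 2 / 8) := by
    intro i
    have hpre : MeasurableSet (X i ⁻¹' A) := (hmeas i) hA
    set p := (μ (X i ⁻¹' A)).toReal with hp
    have hp0 : 0 ≤ p := ENNReal.toReal_nonneg
    have hpointwise : ∀ ω, Real.exp (s * Y i ω) = 1 + (Real.exp s - 1) * Y i ω := by
      intro ω
      rcases hY01 i ω with h | h <;> rw [h] <;> simp
    have hYint : Integrable (Y i) μ := by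
      have : Y i = (X i ⁻¹' A).indicator (fun _ => (1:ℝ)) := by
        funext ω
        rw [hY]
        exact (Set.indicator_comp_right (X i) (g := fun _ => (1:ℝ))) ▸ rfl
      rw [this]
      exact (integrable_const (1:ℝ)).indicator hpre
    have hYintegral : ∫ ω, Y i ω ∂μ = p := by
      have h1 : Y i = (X i ⁻¹' A).indicator (fun _ => (1:ℝ)) := by
        funext ω
        rw [hY]
        exact (Set.indicator_comp_right (X i) (g := fun _ => (1:ℝ))) ▸ rfl
      rw [h1, integral_indicator_const _ hpre]
      simp [hp]
      rfl
    have hmgf1 : mgf (Y i) μ s = 1 + (Real.exp s - 1) * p := by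
      rw [mgf]
      calc ∫ ω, Real.exp (s * Y i ω) ∂μ = ∫ ω, (1 + (Real.exp s - 1) * Y i ω) ∂μ := by
            congr 1; funext ω; exact hpointwise ω
      _ = 1 + (Real.exp s - 1) * p := by
          rw [integral_add (integrable_const 1) (hYint.const_mul _), integral_const,
            MeasureTheory.integral_const_mul, hYintegral]
          simp
    have hp1 : p ≤ pm := hple i
    have hes : (1:ℝ) ≤ Real.exp s := Real.one_le_exp hs0
    calc mgf (Y i) μ s = 1 + (Real.exp s - 1) * p := hmgf1
    _ ≤ 1 + (Real.exp s - 1) * pm := by nlinarith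
    _ = 1 - pm + pm * Real.exp s := by ring
    _ ≤ Real.exp (pm * s + s ^ 2 / 8) := hoeffding_bernoulli hpm0 hpm1 hs0
  have hmgfS : mgf S μ s = ∏ i, mgf (Y i) μ s := hYindep.mgf_sum hYmeas Finset.univ
  have hprod : mgf S μ s ≤ Real.exp (n * (pm * s + s ^ 2 / 8)) := by
    rw [hmgfS]
    calc ∏ i, mgf (Y i) μ s ≤ ∏ _i : Fin n, Real.exp (pm * s + s ^ 2 / 8) :=
          Finset.prod_le_prod (fun i _ => mgf_nonneg) (fun i _ => hmgf i)
    _ = Real.exp (pm * s + s ^ 2 / 8) ^ n := by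
          rw [Finset.prod_const, Finset.card_univ, Fintype.card_fin]
    _ = Real.exp (n * (pm * s + s ^ 2 / 8)) := by
          rw [← Real.exp_nat_mul]
  have hexp : Real.exp (-s * c) * Real.exp (n * (pm * s + s ^ 2 / 8))
      = Real.exp (-2 * d ^ 2 / n) := by
    rw [← Real.exp_add]
    congr 1
    rw [hsdef, hd]
    field_simp
    ring
  have hsetEq : {ω | c ≤ ∑ i, A.indicator (fun _ => (1:ℝ)) (X i ω)} = {ω | c ≤ S ω} := by
    ext ω
    simp only [Set.mem_setOf_eq, hSapp, hY]
  rw [hsetEq]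
  have hfin : μ {ω | c ≤ S ω} ≠ ⊤ := measure_ne_top μ _
  calc μ {ω | c ≤ S ω} = ENNReal.ofReal (μ {ω | c ≤ S ω}).toReal :=
        (ENNReal.ofReal_toReal hfin).symm
  _ ≤ ENNReal.ofReal (Real.exp (-s * c) * mgf S μ s) := ENNReal.ofReal_le_ofReal key
  _ ≤ ENNReal.ofReal (Real.exp (-2 * (c - n * pm) ^ 2 / n)) := by
      apply ENNReal.ofReal_le_ofReal
      rw [← hd, ← hexp]
      exact mul_le_mul_of_nonneg_left hprod (Real.exp_pos _).le

set_option maxHeartbeats 1000000 in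
theorem stmt_17 {Ω : Type*} [MeasurableSpace Ω] (μ : Measure Ω) [IsProbabilityMeasure μ]
    (n : ℕ) (L r mD : ℝ) (hL : 0 < L) (hr : 0 < r) (hLr : L * r ≤ 1/2)
    (D : Measure ℝ) [IsProbabilityMeasure D]
    (hmed1 : (1:ENNReal)/2 ≤ D (Set.Iic mD)) (hmed2 : (1:ENNReal)/2 ≤ D (Set.Ici mD))
    (huniq : ∀ m' : ℝ, (1:ENNReal)/2 ≤ D (Set.Iic m') → (1:ENNReal)/2 ≤ D (Set.Ici m') →
      m' = mD)
    (hdens : ∀ S : Set ℝ, MeasurableSet S → S ⊆ Set.Icc (mD - r) (mD + r) →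
      ENNReal.ofReal L * volume S ≤ D S)
    (X : Fin n → Ω → ℝ) (hmeas : ∀ i, Measurable (X i))
    (hindep : iIndepFun X μ)
    (hlaw : ∀ i, μ.map (X i) = D)
    (t : ℝ) (ht0 : 0 ≤ t) (htr : t ≤ r) :
    μ {ω | t ≤ |leftMedian (fun i => X i ω) - mD|}
      ≤ ENNReal.ofReal (2 * Real.exp (-(n * L^2 * t^2) / 2)) := by
  set ε := L * t with hε
  have hε0 : 0 ≤ ε := mul_nonneg hL.le ht0
  have hεhalf : ε ≤ 1/2 := by
    calc ε = L * t := hε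
    _ ≤ L * r := mul_le_mul_of_nonneg_left htr hL.le
    _ ≤ 1/2 := hLr
  by_cases htriv : (n:ℝ) * ε < 2
  · -- trivial case : the RHS is at least 1
    have hx : (n:ℝ) * L^2 * t^2 / 2 ≤ 1/2 := by
      have h1 : (n:ℝ) * L^2 * t^2 = ((n:ℝ) * ε) * ε := by rw [hε]; ring
      nlinarith [mul_nonneg (Nat.cast_nonneg n : (0:ℝ) ≤ n) hε0]
    have h2 : (1:ℝ) ≤ 2 * Real.exp (-(n * L^2 * t^2) / 2) := by
      have h3 : (1:ℝ)/2 ≤ Real.exp (-(1/2) : ℝ) := by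
        have := Real.add_one_le_exp (-(1/2) : ℝ)
        linarith
      have h4 : Real.exp (-(1/2) : ℝ) ≤ Real.exp (-(n * L^2 * t^2) / 2) := by
        apply Real.exp_le_exp.2
        linarith
      linarith
    calc μ {ω | t ≤ |leftMedian (fun i => X i ω) - mD|} ≤ μ Set.univ :=
          measure_mono (Set.subset_univ _)
    _ = 1 := measure_univ
    _ ≤ ENNReal.ofReal (2 * Real.exp (-(n * L^2 * t^2) / 2)) := ENNReal.one_le_ofReal.2 h2
  · push_neg at htriv
    have hε2 : (2:ℝ) ≤ n * ε := htriv
    have hnR4 : (4:ℝ) ≤ n := by nlinarith [(Nat.cast_nonneg n : (0:ℝ) ≤ (n:ℝ))]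
    have hn4 : 4 ≤ n := by exact_mod_cast hnR4
    have hn : 0 < n := by omega
    have ht : 0 < t := by
      rcases lt_or_eq_of_le ht0 with h | h
      · exact h
      · exfalso; rw [hε, ← h] at hε2; simp at hε2; linarith
    -- probability bounds for the two tails
    have hDmap : ∀ (i : Fin n) (A : Set ℝ), MeasurableSet A → μ (X i ⁻¹' A) = D A := by
      intro i A hA
      rw [← hlaw i, Measure.map_apply (hmeas i) hA]
    have htailbound : ∀ s1 s2 s3 : Set ℝ, MeasurableSet s1 → MeasurableSet s2 →
        MeasurableSet s3 → Disjoint s1 s2 → Disjoint s1 s3 → Disjoint s2 s3 →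
        ENNReal.ofReal ε ≤ D s2 → (1:ENNReal)/2 ≤ D s3 →
        (D s1).toReal ≤ 1/2 - ε := by
      intro s1 s2 s3 hm1 hm2 hm3 h12 h13 h23 hds2 hds3
      have hsum : D s1 + D s2 + D s3 ≤ 1 := by
        rw [add_assoc, ← measure_union h23 hm3, ← measure_union
          (Set.disjoint_union_right.2 ⟨h12, h13⟩) (hm2.union hm3)]
        calc D (s1 ∪ (s2 ∪ s3)) ≤ D Set.univ := measure_mono (Set.subset_univ _)
        _ = 1 := measure_univ
      have hf1 : D s1 ≠ ⊤ := measure_ne_top D _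
      have hf2 : D s2 ≠ ⊤ := measure_ne_top D _
      have hf3 : D s3 ≠ ⊤ := measure_ne_top D _
      have htsum : (D s1).toReal + (D s2).toReal + (D s3).toReal ≤ 1 := by
        rw [← ENNReal.toReal_add hf1 hf2, ← ENNReal.toReal_add (ENNReal.add_ne_top.2 ⟨hf1, hf2⟩) hf3]
        calc ((D s1 + D s2 + D s3).toReal) ≤ (1:ENNReal).toReal :=
              ENNReal.toReal_mono ENNReal.one_ne_top hsum
        _ = 1 := ENNReal.toReal_one
      have ht2 : ε ≤ (D s2).toReal := by
        calc ε = (ENNReal.ofReal ε).toReal := (ENNReal.toReal_ofReal hε0).symm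
        _ ≤ (D s2).toReal := ENNReal.toReal_mono hf2 hds2
      have ht3 : (1:ℝ)/2 ≤ (D s3).toReal := by
        have h30 : ((1:ENNReal)/2).toReal = 1/2 := by norm_num
        calc (1:ℝ)/2 = ((1:ENNReal)/2).toReal := h30.symm
        _ ≤ (D s3).toReal := ENNReal.toReal_mono hf3 hds3
      linarith
    have hIoo1 : ENNReal.ofReal ε ≤ D (Set.Ioo (mD - t) mD) := by
      have hsub : Set.Ioo (mD - t) mD ⊆ Set.Icc (mD - r) (mD + r) := by
        intro x hx
        exact ⟨by linarith [hx.1], by linarith [hx.2]⟩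
      have h1 := hdens _ measurableSet_Ioo hsub
      calc ENNReal.ofReal ε = ENNReal.ofReal L * ENNReal.ofReal t := by
            rw [hε, ENNReal.ofReal_mul hL.le]
      _ = ENNReal.ofReal L * volume (Set.Ioo (mD - t) mD) := by
            rw [Real.volume_Ioo, sub_sub_cancel]
      _ ≤ D (Set.Ioo (mD - t) mD) := h1
    have hIoo2 : ENNReal.ofReal ε ≤ D (Set.Ioo mD (mD + t)) := by
      have hsub : Set.Ioo mD (mD + t) ⊆ Set.Icc (mD - r) (mD + r) := by
        intro x hx
        exact ⟨by linarith [hx.1], by linarith [hx.2]⟩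
      have h1 := hdens _ measurableSet_Ioo hsub
      calc ENNReal.ofReal ε = ENNReal.ofReal L * ENNReal.ofReal t := by
            rw [hε, ENNReal.ofReal_mul hL.le]
      _ = ENNReal.ofReal L * volume (Set.Ioo mD (mD + t)) := by
            rw [Real.volume_Ioo, add_sub_cancel_left]
      _ ≤ D (Set.Ioo mD (mD + t)) := h1
    have hp1 : (D (Set.Iic (mD - t))).toReal ≤ 1/2 - ε := by
      apply htailbound (Set.Iic (mD - t)) (Set.Ioo (mD - t) mD) (Set.Ici mD)
        measurableSet_Iic measurableSet_Ioo measurableSet_Ici ?_ ?_ ?_ hIoo1 hmed2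
      · rw [Set.disjoint_left]; intro x hx1 hx2
        simp only [Set.mem_Iic, Set.mem_Ioo] at hx1 hx2; linarith [hx2.1]
      · rw [Set.disjoint_left]; intro x hx1 hx2
        simp only [Set.mem_Iic, Set.mem_Ici] at hx1 hx2; linarith
      · rw [Set.disjoint_left]; intro x hx1 hx2
        simp only [Set.mem_Ioo, Set.mem_Ici] at hx1 hx2; linarith [hx1.2]
    have hp2 : (D (Set.Ici (mD + t))).toReal ≤ 1/2 - ε := by
      apply htailbound (Set.Ici (mD + t)) (Set.Ioo mD (mD + t)) (Set.Iic mD)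
        measurableSet_Ici measurableSet_Ioo measurableSet_Iic ?_ ?_ ?_ hIoo2 hmed1
      · rw [Set.disjoint_left]; intro x hx1 hx2
        simp only [Set.mem_Ici, Set.mem_Ioo] at hx1 hx2; linarith [hx2.2]
      · rw [Set.disjoint_left]; intro x hx1 hx2
        simp only [Set.mem_Ici, Set.mem_Iic] at hx1 hx2; linarith
      · rw [Set.disjoint_left]; intro x hx1 hx2
        simp only [Set.mem_Ioo, Set.mem_Iic] at hx1 hx2; linarith [hx1.1]
    -- numeric facts about m := n / 2
    obtain ⟨m, hm⟩ : ∃ m, m = n / 2 := ⟨n / 2, rfl⟩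
    have hm2 : 2 ≤ m := by omega
    have hmn : m ≤ n := by omega
    have hmR1 : (m:ℝ) ≤ (n:ℝ)/2 := by
      have : 2 * m ≤ n := by omega
      have := (Nat.cast_le (α := ℝ)).2 this
      push_cast at this
      linarith
    have hmR2 : (n:ℝ)/2 - 1/2 ≤ (m:ℝ) := by
      have : n ≤ 2 * m + 1 := by omega
      have := (Nat.cast_le (α := ℝ)).2 this
      push_cast at this
      linarith
    set pm : ℝ := 1/2 - ε with hpm
    have hpm0 : 0 ≤ pm := by rw [hpm]; linarith
    have hpm1 : pm ≤ 1 := by rw [hpm]; linarith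
    set c₁ : ℝ := (m:ℝ) with hc₁
    set c₂ : ℝ := (n:ℝ) - m + 1 with hc₂
    -- the two tail events
    set E1 := {ω | c₁ ≤ ∑ i, (Set.Iic (mD - t)).indicator (fun _ => (1:ℝ)) (X i ω)} with hE1
    set E2 := {ω | c₂ ≤ ∑ i, (Set.Ici (mD + t)).indicator (fun _ => (1:ℝ)) (X i ω)} with hE2
    have hsub : {ω | t ≤ |leftMedian (fun i => X i ω) - mD|} ⊆ E1 ∪ E2 := by
      intro ω hω
      simp only [Set.mem_setOf_eq] at hω
      rcases le_abs.1 hω with h | h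
      · -- mD + t ≤ leftMedian
        right
        have hmle : mD + t ≤ leftMedian (fun i => X i ω) := by linarith
        set q : ℝ → Bool := fun x => decide (x < mD + t) with hqdef
        have hq : ∀ x y : ℝ, x ≤ y → q y = true → q x = true := by
          intro x y hxy hy
          simp only [hqdef, decide_eq_true_eq] at *
          linarith
        have hnot : ¬ (n / 2 - 1 + 1 ≤ (List.ofFn (fun i => X i ω)).countP q) := by
          intro hcon
          have := (leftMedian_pred hn (fun i => X i ω) q hq).2 hcon
          simp only [hqdef, decide_eq_true_eq] at this
          linarith
        have hcount : (List.ofFn (fun i => X i ω)).countP q ≤ m - 1 := by omega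
        have hlen : (List.ofFn (fun i => X i ω)).length = n := List.length_ofFn
        have hsplit := List.length_eq_countP_add_countP q (l := List.ofFn (fun i => X i ω))
        have hcompl : (List.ofFn (fun i => X i ω)).countP (fun a => decide ¬(q a = true))
            = (List.ofFn (fun i => X i ω)).countP (fun a => decide (mD + t ≤ a)) := by
          apply List.countP_congr
          intro a _
          simp [hqdef, not_lt]
        have hge : n - (m - 1) ≤ (List.ofFn (fun i => X i ω)).countP
            (fun a => decide (mD + t ≤ a)) := by
          rw [← hcompl]
          omega
        have hsum := countP_ofFn_eq_sum (fun i => X i ω) (fun a => decide (mD + t ≤ a))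
        show c₂ ≤ ∑ i, (Set.Ici (mD + t)).indicator (fun _ => (1:ℝ)) (X i ω)
        have heq : ∑ i, (Set.Ici (mD + t)).indicator (fun _ => (1:ℝ)) (X i ω)
            = ((List.ofFn (fun i => X i ω)).countP (fun a => decide (mD + t ≤ a)) : ℝ) := by
          rw [hsum]
          push_cast
          apply Finset.sum_congr rfl
          intro i _
          by_cases h : mD + t ≤ X i ω
          · simp [Set.indicator_of_mem (Set.mem_Ici.2 h), h]
          · simp [Set.indicator_of_notMem (fun hh => h (Set.mem_Ici.1 hh)), h]
        rw [heq]
        have hcast : ((n - (m - 1) : ℕ) : ℝ) = (n:ℝ) - m + 1 := by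
          have h1 : n - (m - 1) = n - m + 1 := by omega
          rw [h1]
          push_cast [Nat.cast_sub hmn]
          ring
        calc c₂ = ((n - (m - 1) : ℕ) : ℝ) := by rw [hc₂, hcast]
        _ ≤ _ := by exact_mod_cast hge
      · -- leftMedian ≤ mD - t
        left
        have hmle : leftMedian (fun i => X i ω) ≤ mD - t := by linarith
        set q : ℝ → Bool := fun x => decide (x ≤ mD - t) with hqdef
        have hq : ∀ x y : ℝ, x ≤ y → q y = true → q x = true := by
          intro x y hxy hy
          simp only [hqdef, decide_eq_true_eq] at *
          linarith
        have hqm : q (leftMedian (fun i => X i ω)) = true := by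
          simp [hqdef, hmle]
        have hcount := (leftMedian_pred hn (fun i => X i ω) q hq).1 hqm
        have hmcount : m ≤ (List.ofFn (fun i => X i ω)).countP q := by omega
        have hsum := countP_ofFn_eq_sum (fun i => X i ω) q
        show c₁ ≤ ∑ i, (Set.Iic (mD - t)).indicator (fun _ => (1:ℝ)) (X i ω)
        have heq : ∑ i, (Set.Iic (mD - t)).indicator (fun _ => (1:ℝ)) (X i ω)
            = ((List.ofFn (fun i => X i ω)).countP q : ℝ) := by
          rw [hsum]
          push_cast
          apply Finset.sum_congr rfl
          intro i _
          by_cases h : X i ω ≤ mD - t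
          · simp [hqdef, Set.indicator_of_mem (Set.mem_Iic.2 h), h]
          · simp [hqdef, Set.indicator_of_notMem (fun hh => h (Set.mem_Iic.1 hh)), h]
        rw [heq, hc₁]
        exact_mod_cast hmcount
    -- apply the Chernoff bound to each tail
    have hch1 : μ E1 ≤ ENNReal.ofReal (Real.exp (-2 * (c₁ - n * pm) ^ 2 / n)) := by
      rw [hE1]
      apply indicator_chernoff μ hn X hmeas hindep _ measurableSet_Iic pm c₁ hpm0 hpm1
      · intro i
        rw [hDmap i _ measurableSet_Iic]
        exact hp1
      · rw [hc₁, hpm]; nlinarith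
    have hch2 : μ E2 ≤ ENNReal.ofReal (Real.exp (-2 * (c₂ - n * pm) ^ 2 / n)) := by
      rw [hE2]
      apply indicator_chernoff μ hn X hmeas hindep _ measurableSet_Ici pm c₂ hpm0 hpm1
      · intro i
        rw [hDmap i _ measurableSet_Ici]
        exact hp2
      · rw [hc₂, hpm]; nlinarith
    -- numeric comparison of the exponents
    have hnR : (0:ℝ) < n := by linarith
    have hgoalexp : ∀ d : ℝ, (n:ℝ) * ε / 2 ≤ d →
        Real.exp (-2 * d ^ 2 / n) ≤ Real.exp (-(n * L^2 * t^2) / 2) := by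
      intro d hdge
      have hnR' : (0:ℝ) < n := by positivity
      apply Real.exp_le_exp.2
      have hd0 : 0 ≤ (n:ℝ) * ε / 2 := by positivity
      have hsq : ((n:ℝ) * ε / 2) ^ 2 ≤ d ^ 2 := by nlinarith
      have hrw : (n:ℝ) * L^2 * t^2 = n * ε^2 := by rw [hε]; ring
      rw [hrw, div_le_div_iff₀ hnR' two_pos]
      nlinarith
    have hd1 : (n:ℝ) * ε / 2 ≤ c₁ - n * pm := by
      rw [hc₁, hpm]
      have : (n:ℝ) * (1/2 - ε) = n/2 - n * ε := by ring
      nlinarith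
    have hd2 : (n:ℝ) * ε / 2 ≤ c₂ - n * pm := by
      rw [hc₂, hpm]
      nlinarith
    calc μ {ω | t ≤ |leftMedian (fun i => X i ω) - mD|} ≤ μ (E1 ∪ E2) := measure_mono hsub
    _ ≤ μ E1 + μ E2 := measure_union_le _ _
    _ ≤ ENNReal.ofReal (Real.exp (-(n * L^2 * t^2) / 2))
        + ENNReal.ofReal (Real.exp (-(n * L^2 * t^2) / 2)) := by
        gcongr
        · exact hch1.trans (ENNReal.ofReal_le_ofReal (hgoalexp _ hd1))
        · exact hch2.trans (ENNReal.ofReal_le_ofReal (hgoalexp _ hd2))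
    _ = ENNReal.ofReal (2 * Real.exp (-(n * L^2 * t^2) / 2)) := by
        rw [← ENNReal.ofReal_add (Real.exp_pos _).le (Real.exp_pos _).le]
        congr 1
        ring
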